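/- For every 0 ≤ p ≤ q_1−1, the Jacobian matrix of (c_0,…,c_{n+r-1}, ψ_0,…,ψ_{pr-1}) evaluated at the origin has rank n (corank r in the n+r variables). (This expresses that the first q_1 entries of the Thom–Boardman symbol TB(I(μ_{n,r})) are all equal to r.) -/

import Mathlib

open MvPolynomial Matrix

noncomputable section

namespace TB

/-- The polynomial ring `ℂ[a_0,…,a_{n-1},b_0,…,b_{r-1}]`: variable `Sum.inl i` is `a_i`
and `Sum.inr j` is `b_j`. -/
abbrev R (n r : ℕ) : Type := MvPolynomial (Fin n ⊕ Fin r) ℂ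

/-- The power series `1 + (cf 1)·t + ⋯ + (cf m)·t^m`. -/
def ser {A : Type*} [CommRing A] (m : ℕ) (cf : ℕ → A) : PowerSeries A :=
  PowerSeries.mk fun k => if k = 0 then 1 else if k ≤ m then cf k else 0

/-- `1 + a_{n-1} t + ⋯ + a_0 t^n`. -/
def Aser (n r : ℕ) : PowerSeries (R n r) :=
  ser n fun k => if h : 1 ≤ k ∧ k ≤ n then X (Sum.inl ⟨n - k, by omega⟩) else 0

/-- `1 + b_{r-1} t + ⋯ + b_0 t^r`. -/
def Bser (n r : ℕ) : PowerSeries (R n r) :=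
  ser r fun k => if h : 1 ≤ k ∧ k ≤ r then X (Sum.inr ⟨r - k, by omega⟩) else 0

/-- `1 + d_{n-1} t + ⋯ + d_0 t^n`. -/
def Dser (n r : ℕ) (d : Fin n → R n r) : PowerSeries (R n r) :=
  ser n fun k => if h : 1 ≤ k ∧ k ≤ n then d ⟨n - k, by omega⟩ else 0

/-- `1 + d_{n-1} t + ⋯ + d_1 t^{n-1}`. -/
def Dhatser (n r : ℕ) (d : Fin n → R n r) : PowerSeries (R n r) :=
  ser (n - 1) fun k => if h : 1 ≤ k ∧ k ≤ n - 1 then d ⟨n - k, by omega⟩ else 0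

/-- `f(x) = x^n + a_{n-1}x^{n-1} + ⋯ + a_0`. -/
def fpoly (n r : ℕ) : Polynomial (R n r) :=
  Polynomial.X ^ n + ∑ i : Fin n, Polynomial.C (X (Sum.inl i)) * Polynomial.X ^ (i : ℕ)

/-- `g(x) = x^r + b_{r-1}x^{r-1} + ⋯ + b_0`. -/
def gpoly (n r : ℕ) : Polynomial (R n r) :=
  Polynomial.X ^ r + ∑ j : Fin r, Polynomial.C (X (Sum.inr j)) * Polynomial.X ^ (j : ℕ)

/-- The coefficient `c_k` of `f·g`, for `0 ≤ k ≤ n+r-1`. -/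
def cc (n r : ℕ) (k : Fin (n + r)) : R n r := (fpoly n r * gpoly n r).coeff (k : ℕ)

/-- `d_0, …, d_{n-1}` are the unique polynomials with
`(1 + b_{r-1}t + ⋯ + b_0 t^r)(1 + d_{n-1}t + ⋯ + d_0 t^n) ≡ 1 + a_{n-1}t + ⋯ + a_0 t^n (mod t^{n+1})`. -/
def dSpec (n r : ℕ) (d : Fin n → R n r) : Prop :=
  ∀ k ≤ n, PowerSeries.coeff k (Bser n r * Dser n r d)
    = PowerSeries.coeff k (Aser n r)

/-- `ψ_i = d_i` for `0 ≤ i ≤ r-1`, and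
`ψ_{s·r+i} = ∂^s d_{r-1} / (∂b_0^{s-1} ∂b_{r-1-i})` for `s ≥ 1`, `0 ≤ i ≤ r-1`. -/
def psi (n r : ℕ) (hr : 0 < r) (hrn : r ≤ n) (d : Fin n → R n r) (m : ℕ) : R n r :=
  if h : m < r then d ⟨m, by omega⟩
  else
    (fun q => pderiv (Sum.inr (⟨0, hr⟩ : Fin r)) q)^[m / r - 1]
      (pderiv (Sum.inr (⟨r - 1 - m % r, by omega⟩ : Fin r)) (d ⟨r - 1, by omega⟩))

/-- The `m×m` lower shift matrix over `R n r`. -/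
def Lmat (n r m : ℕ) : Matrix (Fin m) (Fin m) (R n r) :=
  Matrix.of fun i j => if (i : ℕ) = (j : ℕ) + 1 then 1 else 0

/-- `B = I_n + b_{r-1}L_n + ⋯ + b_0 L_n^r`. -/
def Bmat (n r : ℕ) (hr : 0 < r) : Matrix (Fin n) (Fin n) (R n r) :=
  1 + ∑ k ∈ Finset.range r, (X (Sum.inr (⟨r - 1 - k, by omega⟩ : Fin r)) : R n r) • Lmat n r n ^ (k + 1)

/-- `D̂ = I_n + d_{n-1}L_n + ⋯ + d_1 L_n^{n-1}`. -/
def Dhat (n r : ℕ) (hn : 0 < n) (d : Fin n → R n r) : Matrix (Fin n) (Fin n) (R n r) :=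
  1 + ∑ k ∈ Finset.range (n - 1), d ⟨n - 1 - k, by omega⟩ • Lmat n r n ^ (k + 1)

/-- `D`: the first `r` columns of `D̂`. -/
def Dmat (n r : ℕ) (hn : 0 < n) (hrn : r ≤ n) (d : Fin n → R n r) :
    Matrix (Fin n) (Fin r) (R n r) :=
  (Dhat n r hn d).submatrix id (Fin.castLE hrn)

/-- `Â = I_n + a_{n-1}L_n + ⋯ + a_1 L_n^{n-1}`. -/
def Ahat (n r : ℕ) (hn : 0 < n) : Matrix (Fin n) (Fin n) (R n r) :=
  1 + ∑ k ∈ Finset.range (n - 1),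
    (X (Sum.inl (⟨n - 1 - k, by omega⟩ : Fin n)) : R n r) • Lmat n r n ^ (k + 1)

/-- `A`: the first `r` columns of `Â`. -/
def Amat (n r : ℕ) (hn : 0 < n) (hrn : r ≤ n) : Matrix (Fin n) (Fin r) (R n r) :=
  (Ahat n r hn).submatrix id (Fin.castLE hrn)

/-- The Jacobian matrix of a family `p` of elements of `R n r`: the row of index `i` is
`(∂p_i/∂a_{n-1}, …, ∂p_i/∂a_0, ∂p_i/∂b_{r-1}, …, ∂p_i/∂b_0)`. -/
def jac {n r : ℕ} {ι : Type*} (p : ι → R n r) : Matrix ι (Fin (n + r)) (R n r) :=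
  Matrix.of fun i j =>
    if h : (j : ℕ) < n then pderiv (Sum.inl (⟨n - 1 - (j : ℕ), by omega⟩ : Fin n)) (p i)
    else
      pderiv (Sum.inr (⟨r - 1 - ((j : ℕ) - n), by have := j.isLt; omega⟩ : Fin r)) (p i)

/-- The set of all `k×k` minors of a matrix. -/
def minorsSet {n r : ℕ} {ι : Type*} (k : ℕ) (M : Matrix ι (Fin (n + r)) (R n r)) :
    Set (R n r) :=
  { x | ∃ (ri : Fin k → ι) (ci : Fin k → Fin (n + r)), x = (M.submatrix ri ci).det }

/-- Evaluation at the origin `a_i = b_j = 0`. -/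
def ev0 (n r : ℕ) : R n r →+* ℂ := eval fun _ => 0

/-- The maximal ideal `(a_0,…,a_{n-1},b_0,…,b_{r-1})`. -/
def mIdeal (n r : ℕ) : Ideal (R n r) :=
  Ideal.span (Set.range (X : (Fin n ⊕ Fin r) → R n r))

/-- `1 + g_1 t + ⋯ + g_{r_1} t^{r_1}` over `S = ℂ[g_1,…,g_{r_1},b_0,…,b_{r-1}] = R r1 r`,
where `g_k` is the variable `Sum.inl ⟨k-1⟩`. -/
def Gser (r1 r : ℕ) : PowerSeries (R r1 r) :=
  ser r1 fun k => if h : 1 ≤ k ∧ k ≤ r1 then X (Sum.inl ⟨k - 1, by omega⟩) else 0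

/-- `1 + w_{r-1} t + ⋯ + w_0 t^r`. -/
def Wser (r1 r : ℕ) (w : Fin r → R r1 r) : PowerSeries (R r1 r) :=
  ser r fun k => if h : 1 ≤ k ∧ k ≤ r then w ⟨r - k, by omega⟩ else 0

/-- `1 + w_{r-1} t + ⋯ + w_1 t^{r-1}`. -/
def Whatser (r1 r : ℕ) (w : Fin r → R r1 r) : PowerSeries (R r1 r) :=
  ser (r - 1) fun k => if h : 1 ≤ k ∧ k ≤ r - 1 then w ⟨r - k, by omega⟩ else 0

/-- `w_0,…,w_{r-1}` are the unique polynomials with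
`(1 + g_1 t + ⋯ + g_{r_1}t^{r_1})(1 + w_{r-1}t + ⋯ + w_0 t^r) ≡ 1 + b_{r-1}t + ⋯ + b_0 t^r
(mod t^{r+1})`. -/
def wSpec (r1 r : ℕ) (w : Fin r → R r1 r) : Prop :=
  ∀ k ≤ r, PowerSeries.coeff k (Gser r1 r * Wser r1 r w)
    = PowerSeries.coeff k (Bser r1 r)

/-- `φ'_i = w_i` for `0 ≤ i ≤ r_1-1`, and
`φ'_{s·r_1+i} = ∂^s w_{r_1-1} / (∂g_{r_1}^{s-1} ∂g_{1+i})` for `s ≥ 1`, `0 ≤ i ≤ r_1-1`. -/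
def phi' (r1 r : ℕ) (h1 : 0 < r1) (h2 : r1 < r) (w : Fin r → R r1 r) (m : ℕ) : R r1 r :=
  if h : m < r1 then w ⟨m, by omega⟩
  else
    (fun q => pderiv (Sum.inl (⟨r1 - 1, by omega⟩ : Fin r1)) q)^[m / r1 - 1]
      (pderiv (Sum.inl (⟨m % r1, Nat.mod_lt m h1⟩ : Fin r1)) (w ⟨r1 - 1, by omega⟩))

/-- The substitution `g_k ↦ γ_{n-k}`, `b_j ↦ b_j`, from `S = R r1 r` to `R n r`. -/
def subst (n r r1 : ℕ) (γ : ℕ → R n r) : R r1 r →ₐ[ℂ] R n r :=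
  aeval (Sum.elim (fun i : Fin r1 => γ (n - ((i : ℕ) + 1))) fun j : Fin r => X (Sum.inr j))



/-! ### Auxiliary machinery -/

section Aux

/-- Weight function for the grading. -/
def wt (n r : ℕ) : Fin n ⊕ Fin r → ℕ := Sum.elim (fun i => n - (i : ℕ)) (fun j => r - (j : ℕ))

abbrev WH (n r : ℕ) (φ : R n r) (D : ℕ) : Prop := IsWeightedHomogeneous (wt n r) φ D

variable {n r : ℕ}

lemma weight_single (v : Fin n ⊕ Fin r) :
    (Finsupp.weight (wt n r)) (Finsupp.single v 1) = wt n r v := by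
  rw [Finsupp.weight_apply, Finsupp.sum_single_index] <;> simp

lemma WH.pderiv {φ : R n r} {D : ℕ} (h : WH n r φ D) (v : Fin n ⊕ Fin r) :
    WH n r (MvPolynomial.pderiv v φ) (D - wt n r v) := by
  have hrw : MvPolynomial.pderiv v φ = ∑ s ∈ φ.support,
      monomial (s - Finsupp.single v 1) (coeff s φ * s v) := by
    conv_lhs => rw [φ.as_sum]
    rw [map_sum]
    simp [pderiv_monomial]
  rw [hrw]
  apply IsWeightedHomogeneous.sum
  intro s hs
  by_cases hv : s v = 0
  · rw [hv]
    simp only [Nat.cast_zero, mul_zero, monomial_zero]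
    exact isWeightedHomogeneous_zero _ _ _
  · apply isWeightedHomogeneous_monomial
    have hw := h (mem_support_iff.mp hs)
    have hle : Finsupp.single v 1 ≤ s := by
      rw [Finsupp.single_le_iff]; omega
    have hdec : (s - Finsupp.single v 1) + Finsupp.single v 1 = s := tsub_add_cancel_of_le hle
    have h2 : (Finsupp.weight (wt n r)) (s - Finsupp.single v 1) + wt n r v = D := by
      rw [← weight_single (n := n) (r := r) v, ← map_add, hdec, hw]
    omega

lemma WH.ev0_eq_zero {φ : R n r} {D : ℕ} (h : WH n r φ D) (hD : D ≠ 0) : ev0 n r φ = 0 := by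
  have h0 : constantCoeff φ = 0 := by
    by_contra hc
    have hq := h (show coeff 0 φ ≠ 0 from hc)
    rw [map_zero] at hq
    exact hD hq.symm
  rw [ev0, eval_zero', h0]

lemma Bser_hom (k : ℕ) : WH n r (PowerSeries.coeff k (Bser n r)) k := by
  rw [Bser, ser, PowerSeries.coeff_mk]
  split_ifs with hk h1 h2
  · subst hk; exact isWeightedHomogeneous_one _ _
  · have := isWeightedHomogeneous_X ℂ (wt n r) (Sum.inr (⟨r - k, by omega⟩ : Fin r))
    convert this using 1
    simp only [wt, Sum.elim_inr]
    omega
  · exact isWeightedHomogeneous_zero _ _ _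
  · exact isWeightedHomogeneous_zero _ _ _

lemma Aser_hom (k : ℕ) : WH n r (PowerSeries.coeff k (Aser n r)) k := by
  rw [Aser, ser, PowerSeries.coeff_mk]
  split_ifs with hk h1 h2
  · subst hk; exact isWeightedHomogeneous_one _ _
  · have := isWeightedHomogeneous_X ℂ (wt n r) (Sum.inl (⟨n - k, by omega⟩ : Fin n))
    convert this using 1
    simp only [wt, Sum.elim_inl]
    omega
  · exact isWeightedHomogeneous_zero _ _ _
  · exact isWeightedHomogeneous_zero _ _ _

lemma Dser_hom {d : Fin n → R n r} (hd : dSpec n r d) :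
    ∀ k, k ≤ n → WH n r (PowerSeries.coeff k (Dser n r d)) k := by
  intro k
  induction k using Nat.strong_induction_on with
  | _ k IH =>
    intro hk
    rcases Nat.eq_zero_or_pos k with h0 | h0
    · subst h0
      simp only [Dser, ser, PowerSeries.coeff_mk, if_pos rfl]
      exact isWeightedHomogeneous_one _ _
    · have hspec := hd k hk
      rw [PowerSeries.coeff_mul,
        ← Finset.add_sum_erase _ _ (show ((0 : ℕ), k) ∈ Finset.HasAntidiagonal.antidiagonal k by simp)] at hspec
      have hB0 : PowerSeries.coeff 0 (Bser n r) = 1 := by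
        simp [Bser, ser]
      rw [hB0, one_mul] at hspec
      have heq : PowerSeries.coeff k (Dser n r d)
          = PowerSeries.coeff k (Aser n r)
            - ∑ x ∈ (Finset.HasAntidiagonal.antidiagonal k).erase (0, k),
                PowerSeries.coeff x.1 (Bser n r)
                  * PowerSeries.coeff x.2 (Dser n r d) := by
      -- from hspec : Dk + S = Ak
        rw [← hspec]; ring
      rw [heq]
      refine Submodule.sub_mem (weightedHomogeneousSubmodule ℂ (wt n r) k) (Aser_hom k) ?_
      · apply Submodule.sum_mem
        intro x hx
        have hmem := Finset.mem_of_mem_erase hx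
        have hne := Finset.ne_of_mem_erase hx
        rw [Finset.HasAntidiagonal.mem_antidiagonal] at hmem
        have hx1 : 0 < x.1 := by
          rcases Nat.eq_zero_or_pos x.1 with h | h
          · exfalso; apply hne; ext
            · exact h
            · omega
          · exact h
        have hx2 : x.2 < k := by omega
        have hD := IH x.2 hx2 (by omega)
        have hprod := (Bser_hom (n := n) (r := r) x.1).mul hD
        exact hmem ▸ hprod

lemma d_hom {d : Fin n → R n r} (hd : dSpec n r d) (i : Fin n) :
    WH n r (d i) (n - (i : ℕ)) := by
  have hi := i.isLt
  have h := Dser_hom hd (n - (i : ℕ)) (by omega)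
  rw [Dser, ser, PowerSeries.coeff_mk] at h
  rw [if_neg (by omega), if_pos (by omega)] at h
  rw [dif_pos (by omega)] at h
  convert h using 2
  ext
  simp
  omega

lemma psi_hom {d : Fin n → R n r} (hd : dSpec n r d) (hr : 0 < r) (hrn : r ≤ n)
    (m : ℕ) (hm : m < n - r) :
    WH n r (psi n r hr hrn d m) (n - m) := by
  rw [psi]
  split_ifs with h
  · exact d_hom hd _
  · push_neg at h
    have hrm : r ≤ m := h
    set s := m / r with hs
    set i := m % r with hi
    have hir : i < r := Nat.mod_lt m hr
    have hsi : r * s + i = m := by rw [hs, hi]; exact Nat.div_add_mod m r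
    have hs1 : 1 ≤ s := by
      rw [hs, Nat.le_div_iff_mul_le hr]; omega
    have base : WH n r (MvPolynomial.pderiv (Sum.inr (⟨r - 1 - i, by omega⟩ : Fin r))
        (d ⟨r - 1, by omega⟩)) (n - r - i) := by
      have hb := (d_hom hd (⟨r - 1, by omega⟩ : Fin n)).pderiv
        (Sum.inr (⟨r - 1 - i, by omega⟩ : Fin r))
      convert hb using 1
      simp only [wt, Sum.elim_inr]
      omega
    have key : ∀ t, t ≤ s - 1 →
        WH n r ((fun q => MvPolynomial.pderiv (Sum.inr (⟨0, hr⟩ : Fin r)) q)^[t]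
          (MvPolynomial.pderiv (Sum.inr (⟨r - 1 - i, by omega⟩ : Fin r))
            (d ⟨r - 1, by omega⟩))) (n - r - i - t * r) := by
      intro t
      induction t with
      | zero => intro _; simpa using base
      | succ t iht =>
        intro ht
        rw [Function.iterate_succ_apply']
        have hh := (iht (by omega)).pderiv (Sum.inr (⟨0, hr⟩ : Fin r))
        convert hh using 1
        simp only [wt, Sum.elim_inr, Nat.sub_zero]
        rw [Nat.sub_sub (n - r - i) (t * r) r, ← Nat.succ_mul]
    have hfin := key (s - 1) le_rfl
    convert hfin using 1
    obtain ⟨u, hu⟩ : ∃ u, s = u + 1 := ⟨s - 1, by omega⟩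
    have h3 : r * s = r * u + r := by rw [hu]; ring
    have h5 : m = r * u + r + i := by rw [← hsi, h3]
    rw [hu]
    simp only [Nat.add_sub_cancel]
    rw [Nat.mul_comm u r]
    generalize hB : r * u = B at h5 ⊢
    omega

lemma psi_ev0_pderiv {d : Fin n → R n r} (hd : dSpec n r d) (hr : 0 < r) (hrn : r ≤ n)
    (m : ℕ) (hm : m < n - r - 1) (v : Fin n ⊕ Fin r) (hv : wt n r v ≤ r) :
    ev0 n r (MvPolynomial.pderiv v (psi n r hr hrn d m)) = 0 := by
  have h := (psi_hom hd hr hrn m (by omega)).pderiv v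
  exact h.ev0_eq_zero (by omega)

lemma fpoly_coeff (u : ℕ) : (fpoly n r).coeff u =
    (if u = n then 1 else 0) + (if h : u < n then X (Sum.inl (⟨u, h⟩ : Fin n)) else 0) := by
  rw [fpoly, Polynomial.coeff_add, Polynomial.coeff_X_pow]
  congr 1
  rw [Polynomial.finset_sum_coeff]
  simp only [Polynomial.coeff_C_mul, Polynomial.coeff_X_pow, mul_ite, mul_one, mul_zero]
  split_ifs with h
  · rw [Finset.sum_eq_single_of_mem (⟨u, h⟩ : Fin n) (Finset.mem_univ _)
      (fun b _ hb => by
        have hb' : ¬ (u = (b : ℕ)) := fun hc => hb (by ext; simpa using hc.symm)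
        rw [if_neg hb'])]
    exact if_pos rfl
  · apply Finset.sum_eq_zero
    intro b _
    have hb := b.isLt
    rw [if_neg (by omega)]

lemma gpoly_coeff (u : ℕ) : (gpoly n r).coeff u =
    (if u = r then 1 else 0) + (if h : u < r then X (Sum.inr (⟨u, h⟩ : Fin r)) else 0) := by
  rw [gpoly, Polynomial.coeff_add, Polynomial.coeff_X_pow]
  congr 1
  rw [Polynomial.finset_sum_coeff]
  simp only [Polynomial.coeff_C_mul, Polynomial.coeff_X_pow, mul_ite, mul_one, mul_zero]
  split_ifs with h
  · rw [Finset.sum_eq_single_of_mem (⟨u, h⟩ : Fin r) (Finset.mem_univ _)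
      (fun b _ hb => by
        have hb' : ¬ (u = (b : ℕ)) := fun hc => hb (by ext; simpa using hc.symm)
        rw [if_neg hb'])]
    exact if_pos rfl
  · apply Finset.sum_eq_zero
    intro b _
    have hb := b.isLt
    rw [if_neg (by omega)]

lemma ev0_fpoly_coeff (u : ℕ) : ev0 n r ((fpoly n r).coeff u) = if u = n then 1 else 0 := by
  rw [fpoly_coeff, map_add]
  rw [show ev0 n r (if u = n then 1 else 0) = (if u = n then 1 else 0) by split_ifs <;> simp]
  rw [show ev0 n r (if h : u < n then X (Sum.inl (⟨u, h⟩ : Fin n)) else 0) = 0 by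
    split_ifs <;> simp [ev0]]
  rw [add_zero]

lemma ev0_gpoly_coeff (u : ℕ) : ev0 n r ((gpoly n r).coeff u) = if u = r then 1 else 0 := by
  rw [gpoly_coeff, map_add]
  rw [show ev0 n r (if u = r then 1 else 0) = (if u = r then 1 else 0) by split_ifs <;> simp]
  rw [show ev0 n r (if h : u < r then X (Sum.inr (⟨u, h⟩ : Fin r)) else 0) = 0 by
    split_ifs <;> simp [ev0]]
  rw [add_zero]

lemma pderiv_fpoly_coeff_a (t : Fin n) (u : ℕ) :
    MvPolynomial.pderiv (Sum.inl t) ((fpoly n r).coeff u)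
      = if u = (t : ℕ) then 1 else 0 := by
  rw [fpoly_coeff, map_add]
  rw [show MvPolynomial.pderiv (σ := Fin n ⊕ Fin r) (R := ℂ) (Sum.inl t)
      (if u = n then 1 else 0) = 0 by split_ifs <;> simp]
  rw [zero_add]
  split_ifs with h h2 h2
  · rw [show (⟨u, h⟩ : Fin n) = t from by ext; exact h2]
    exact pderiv_X_self _
  · apply pderiv_X_of_ne
    simp only [ne_eq, Sum.inl.injEq, Fin.ext_iff]
    omega
  · exfalso; exact h (h2 ▸ t.isLt)
  · simp

lemma pderiv_fpoly_coeff_b (j : Fin r) (u : ℕ) :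
    MvPolynomial.pderiv (Sum.inr j) ((fpoly n r).coeff u) = 0 := by
  rw [fpoly_coeff, map_add]
  rw [show MvPolynomial.pderiv (σ := Fin n ⊕ Fin r) (R := ℂ) (Sum.inr j)
      (if u = n then 1 else 0) = 0 by split_ifs <;> simp]
  rw [zero_add]
  split_ifs with h
  · exact pderiv_X_of_ne (by simp)
  · simp

lemma pderiv_gpoly_coeff_b (j : Fin r) (u : ℕ) :
    MvPolynomial.pderiv (Sum.inr j) ((gpoly n r).coeff u)
      = if u = (j : ℕ) then 1 else 0 := by
  rw [gpoly_coeff, map_add]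
  rw [show MvPolynomial.pderiv (σ := Fin n ⊕ Fin r) (R := ℂ) (Sum.inr j)
      (if u = r then 1 else 0) = 0 by split_ifs <;> simp]
  rw [zero_add]
  split_ifs with h h2 h2
  · rw [show (⟨u, h⟩ : Fin r) = j from by ext; exact h2]
    exact pderiv_X_self _
  · apply pderiv_X_of_ne
    simp only [ne_eq, Sum.inr.injEq, Fin.ext_iff]
    omega
  · exfalso; exact h (h2 ▸ j.isLt)
  · simp

lemma pderiv_gpoly_coeff_a (t : Fin n) (u : ℕ) :
    MvPolynomial.pderiv (Sum.inl t) ((gpoly n r).coeff u) = 0 := by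
  rw [gpoly_coeff, map_add]
  rw [show MvPolynomial.pderiv (σ := Fin n ⊕ Fin r) (R := ℂ) (Sum.inl t)
      (if u = r then 1 else 0) = 0 by split_ifs <;> simp]
  rw [zero_add]
  split_ifs with h
  · exact pderiv_X_of_ne (by simp)
  · simp

lemma ev0_pderiv_cc_a (t : Fin n) (k : Fin (n + r)) :
    ev0 n r (MvPolynomial.pderiv (Sum.inl t) (cc n r k)) = if (k : ℕ) = (t : ℕ) + r then 1 else 0 := by
  rw [cc, Polynomial.coeff_mul, map_sum, map_sum]
  have hcong : ∀ x ∈ Finset.HasAntidiagonal.antidiagonal (k : ℕ),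
      ev0 n r (MvPolynomial.pderiv (Sum.inl t) ((fpoly n r).coeff x.1 * (gpoly n r).coeff x.2))
        = if x = ((t : ℕ), r) then 1 else 0 := by
    intro x _
    rw [pderiv_mul, map_add, _root_.map_mul, _root_.map_mul, pderiv_fpoly_coeff_a, pderiv_gpoly_coeff_a,
      ev0_fpoly_coeff, ev0_gpoly_coeff]
    rw [map_zero, mul_zero, add_zero]
    rw [show ev0 n r (if x.1 = (t : ℕ) then (1 : R n r) else 0) = if x.1 = (t : ℕ) then 1 else 0 by
      split_ifs <;> simp]
    rcases x with ⟨x1, x2⟩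
    simp only [Prod.mk.injEq, Prod.ext_iff]
    split_ifs with hA hB hC hB hC <;> simp_all
  rw [Finset.sum_congr rfl hcong, Finset.sum_ite_eq' (Finset.HasAntidiagonal.antidiagonal (k : ℕ)) ((t : ℕ), r)
    (fun _ => (1 : ℂ))]
  simp only [Finset.HasAntidiagonal.mem_antidiagonal]
  split_ifs with hA hB hB <;> first | rfl | omega

lemma ev0_pderiv_cc_b (j : Fin r) (k : Fin (n + r)) :
    ev0 n r (MvPolynomial.pderiv (Sum.inr j) (cc n r k)) = if (k : ℕ) = n + (j : ℕ) then 1 else 0 := by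
  rw [cc, Polynomial.coeff_mul, map_sum, map_sum]
  have hcong : ∀ x ∈ Finset.HasAntidiagonal.antidiagonal (k : ℕ),
      ev0 n r (MvPolynomial.pderiv (Sum.inr j) ((fpoly n r).coeff x.1 * (gpoly n r).coeff x.2))
        = if x = (n, (j : ℕ)) then 1 else 0 := by
    intro x _
    rw [pderiv_mul, map_add, _root_.map_mul, _root_.map_mul, pderiv_fpoly_coeff_b, pderiv_gpoly_coeff_b,
      ev0_fpoly_coeff, ev0_gpoly_coeff]
    rw [map_zero, zero_mul, zero_add]
    rw [show ev0 n r (if x.2 = (j : ℕ) then (1 : R n r) else 0) = if x.2 = (j : ℕ) then 1 else 0 by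
      split_ifs <;> simp]
    rcases x with ⟨x1, x2⟩
    simp only [Prod.mk.injEq, Prod.ext_iff]
    split_ifs with hA hB hC hB hC <;> simp_all
  rw [Finset.sum_congr rfl hcong, Finset.sum_ite_eq' (Finset.HasAntidiagonal.antidiagonal (k : ℕ)) (n, (j : ℕ))
    (fun _ => (1 : ℂ))]
  simp only [Finset.HasAntidiagonal.mem_antidiagonal]
  split_ifs with hA hB hB <;> first | rfl | omega

set_option maxHeartbeats 2000000 in
/-- Main rank computation. -/
lemma rank_aux {n r : ℕ} {ι' : Type*} [Fintype ι'] (ψ : ι' → R n r)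
    (hr0 : 0 < r) (hrn : r ≤ n)
    (hψa : ∀ (i : ι') (t : Fin n), n - r ≤ (t : ℕ) →
      ev0 n r (MvPolynomial.pderiv (Sum.inl t) (ψ i)) = 0)
    (hψb : ∀ (i : ι') (j : Fin r),
      ev0 n r (MvPolynomial.pderiv (Sum.inr j) (ψ i)) = 0) :
    ((jac (Sum.elim (cc n r) ψ)).map (ev0 n r)).rank = n := by
  classical
  set M := (jac (Sum.elim (cc n r) ψ)).map (ev0 n r) with hM
  have hMa : ∀ (i : Fin (n + r) ⊕ ι') (t : Fin n),
      M i ⟨n - 1 - (t : ℕ), by have := t.isLt; omega⟩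
        = ev0 n r (MvPolynomial.pderiv (Sum.inl t) (Sum.elim (cc n r) ψ i)) := by
    intro i t
    have ht := t.isLt
    rw [hM, Matrix.map_apply, jac, Matrix.of_apply]
    rw [dif_pos (show ((⟨n - 1 - (t : ℕ), by omega⟩ : Fin (n + r)) : ℕ) < n by
      show n - 1 - (t : ℕ) < n; omega)]
    congr 4
    ext
    show n - 1 - (n - 1 - (t : ℕ)) = (t : ℕ)
    omega
  have hMb : ∀ (i : Fin (n + r) ⊕ ι') (j : Fin r),
      M i ⟨n + r - 1 - (j : ℕ), by have := j.isLt; omega⟩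
        = ev0 n r (MvPolynomial.pderiv (Sum.inr j) (Sum.elim (cc n r) ψ i)) := by
    intro i j
    have hj := j.isLt
    rw [hM, Matrix.map_apply, jac, Matrix.of_apply]
    rw [dif_neg (show ¬ ((⟨n + r - 1 - (j : ℕ), by omega⟩ : Fin (n + r)) : ℕ) < n by
      show ¬ (n + r - 1 - (j : ℕ) < n); omega)]
    congr 4
    ext
    show r - 1 - (n + r - 1 - (j : ℕ) - n) = (j : ℕ)
    omega
  -- ### Lower bound
  have hlb : n ≤ M.rank := by
    let π : ((Fin (n + r) ⊕ ι') → ℂ) →ₗ[ℂ] (Fin n → ℂ) :=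
      LinearMap.funLeft ℂ ℂ (fun i : Fin n => Sum.inl (⟨r + (i : ℕ), by have := i.isLt; omega⟩ : Fin (n + r)))
    have hsurj : Function.Surjective (π ∘ₗ M.mulVecLin) := by
      intro y
      refine ⟨fun t => if h : (t : ℕ) < n then y ⟨n - 1 - (t : ℕ), by omega⟩ else 0, ?_⟩
      funext i
      have hi := i.isLt
      show (M.mulVec _) (Sum.inl ⟨r + (i : ℕ), by omega⟩) = y i
      rw [Matrix.mulVec, dotProduct]
      rw [Finset.sum_eq_single_of_mem (⟨n - 1 - (i : ℕ), by omega⟩ : Fin (n + r))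
        (Finset.mem_univ _) ?_]
      · rw [dif_pos (show ((⟨n - 1 - (i : ℕ), by omega⟩ : Fin (n + r)) : ℕ) < n by
          show n - 1 - (i : ℕ) < n; omega)]
        rw [hMa (Sum.inl ⟨r + (i : ℕ), by omega⟩) i, Sum.elim_inl, ev0_pderiv_cc_a]
        rw [if_pos (show ((⟨r + (i : ℕ), by omega⟩ : Fin (n + r)) : ℕ) = (i : ℕ) + r by
          show r + (i : ℕ) = (i : ℕ) + r; omega)]
        rw [one_mul]
        congr 1
        ext
        show n - 1 - (n - 1 - (i : ℕ)) = (i : ℕ)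
        omega
      · intro b _ hb
        by_cases hbn : (b : ℕ) < n
        · rw [show b = (⟨n - 1 - ((⟨n - 1 - (b : ℕ), by omega⟩ : Fin n) : ℕ), by
            show n - 1 - (n - 1 - (b : ℕ)) < n + r; omega⟩ : Fin (n + r)) from by
              ext; show (b : ℕ) = n - 1 - (n - 1 - (b : ℕ)); omega]
          rw [hMa (Sum.inl ⟨r + (i : ℕ), by omega⟩) ⟨n - 1 - (b : ℕ), by omega⟩, Sum.elim_inl,
            ev0_pderiv_cc_a]
          rw [if_neg (show ¬ ((⟨r + (i : ℕ), by omega⟩ : Fin (n + r)) : ℕ)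
              = ((⟨n - 1 - (b : ℕ), by omega⟩ : Fin n) : ℕ) + r by
            show ¬ (r + (i : ℕ) = n - 1 - (b : ℕ) + r)
            intro hc
            apply hb
            ext
            show (b : ℕ) = n - 1 - (i : ℕ)
            omega)]
          rw [zero_mul]
        · rw [dif_neg hbn, mul_zero]
    have h1 : LinearMap.range (π ∘ₗ M.mulVecLin) = ⊤ := LinearMap.range_eq_top.mpr hsurj
    have h2 : n = Module.finrank ℂ (LinearMap.range (π ∘ₗ M.mulVecLin)) := by
      rw [h1, finrank_top, Module.finrank_fintype_fun_eq_card, Fintype.card_fin]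
    rw [LinearMap.range_comp] at h2
    calc n = Module.finrank ℂ (Submodule.map π (LinearMap.range M.mulVecLin)) := h2
      _ ≤ Module.finrank ℂ (LinearMap.range M.mulVecLin) := Submodule.finrank_map_le π _
      _ = M.rank := rfl
  -- ### Upper bound
  have hub : M.rank ≤ n := by
    set v : Fin r → (Fin (n + r) → ℂ) := fun j t =>
      (if (t : ℕ) = n + r - 1 - (j : ℕ) then 1 else 0)
        - (if (t : ℕ) = r - 1 - (j : ℕ) then 1 else 0) with hv
    have hker : ∀ j : Fin r, M.mulVecLin (v j) = 0 := by
      intro j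
      have hj := j.isLt
      rw [Matrix.mulVecLin_apply]
      funext i
      rw [Pi.zero_apply, Matrix.mulVec, dotProduct]
      simp only [hv, mul_sub, mul_ite, mul_one, mul_zero]
      rw [Finset.sum_sub_distrib]
      have hpick : ∀ (cval : ℕ) (hc : cval < n + r),
          (∑ t : Fin (n + r), if (t : ℕ) = cval then M i t else 0) = M i ⟨cval, hc⟩ := by
        intro cval hc
        rw [Finset.sum_eq_single_of_mem (⟨cval, hc⟩ : Fin (n + r)) (Finset.mem_univ _)
          (fun b _ hb => by
            rw [if_neg (fun hcc => hb (by ext; simpa using hcc))])]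
        exact if_pos rfl
      rw [hpick (n + r - 1 - (j : ℕ)) (by omega), hpick (r - 1 - (j : ℕ)) (by omega)]
      rw [hMb i j]
      rw [show (⟨r - 1 - (j : ℕ), by omega⟩ : Fin (n + r))
          = ⟨n - 1 - ((⟨n - r + (j : ℕ), by omega⟩ : Fin n) : ℕ), by
            show n - 1 - (n - r + (j : ℕ)) < n + r; omega⟩ from by
        ext; show r - 1 - (j : ℕ) = n - 1 - (n - r + (j : ℕ)); omega]
      rw [hMa i ⟨n - r + (j : ℕ), by omega⟩]
      cases i with
      | inl k =>
        simp only [Sum.elim_inl]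
        rw [ev0_pderiv_cc_b, ev0_pderiv_cc_a]
        have hk := k.isLt
        have hco : ((⟨n - r + (j : ℕ), by omega⟩ : Fin n) : ℕ) = n - r + (j : ℕ) := rfl
        rw [hco]
        split_ifs with hA hB hB
        · ring
        · exfalso; omega
        · exfalso; omega
        · ring
      | inr m =>
        simp only [Sum.elim_inr]
        rw [hψb m j, hψa m ⟨n - r + (j : ℕ), by omega⟩
          (by show n - r ≤ n - r + (j : ℕ); omega)]
        ring
    have hli : LinearIndependent ℂ v := by
      apply LinearIndependent.of_comp
        (LinearMap.funLeft ℂ ℂ (fun j : Fin r => (⟨n + r - 1 - (j : ℕ), by have := j.isLt; omega⟩ : Fin (n + r))))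
      have hcomp : (⇑(LinearMap.funLeft ℂ ℂ
            (fun j : Fin r => (⟨n + r - 1 - (j : ℕ), by have := j.isLt; omega⟩ : Fin (n + r)))) ∘ v)
          = fun j => Pi.single j 1 := by
        funext j' j
        have hj := j.isLt
        have hj' := j'.isLt
        simp only [Function.comp_apply, LinearMap.funLeft_apply, hv]
        split_ifs with h1 h2 h2
        · exfalso
          have h2' : n + r - 1 - (j : ℕ) = r - 1 - (j' : ℕ) := h2
          omega
        · have h1' : n + r - 1 - (j : ℕ) = n + r - 1 - (j' : ℕ) := h1
          rw [show j = j' from by ext; omega, Pi.single_eq_same]; ring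
        · exfalso
          have h2' : n + r - 1 - (j : ℕ) = r - 1 - (j' : ℕ) := h2
          omega
        · have h1' : ¬ (n + r - 1 - (j : ℕ) = n + r - 1 - (j' : ℕ)) := h1
          rw [Pi.single_eq_of_ne (show j ≠ j' from fun hc => h1' (by rw [hc]))]; ring
      rw [hcomp]
      have := (Pi.basisFun ℂ (Fin r)).linearIndependent
      convert this using 1
      funext j
      rw [Pi.basisFun_apply]
    have hsp : Submodule.span ℂ (Set.range v) ≤ LinearMap.ker M.mulVecLin :=
      Submodule.span_le.mpr (Set.range_subset_iff.mpr (fun j => hker j))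
    have hr_le : r ≤ Module.finrank ℂ (LinearMap.ker M.mulVecLin) := by
      calc r = Fintype.card (Fin r) := (Fintype.card_fin r).symm
        _ = Module.finrank ℂ (Submodule.span ℂ (Set.range v)) := (finrank_span_eq_card hli).symm
        _ ≤ Module.finrank ℂ (LinearMap.ker M.mulVecLin) := Submodule.finrank_mono hsp
    have hsum := LinearMap.finrank_range_add_finrank_ker M.mulVecLin
    rw [Module.finrank_fintype_fun_eq_card, Fintype.card_fin] at hsum
    have hrk : M.rank = Module.finrank ℂ (LinearMap.range M.mulVecLin) := rfl
    omega
  omega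

end Aux

/-- From `n = q_1·r + r_1` with `q_1 ≥ 1` we get `r ≤ n`. -/
theorem rle (q1 r r1 n : ℕ) (hq1 : 1 ≤ q1) (hn : n = q1 * r + r1) : r ≤ n := by
  have := Nat.le_mul_of_pos_left r hq1
  omega


/-- Corollary 3.7: for `0 ≤ p ≤ q_1-1`, the Jacobian of
`(c, ψ_0,…,ψ_{pr-1})` at the origin has rank `n` (corank `r`). -/
theorem stmt8 (n r q1 r1 : ℕ) (hq1 : 1 ≤ q1) (h1 : 0 < r1) (h2 : r1 < r)
    (hn : n = q1 * r + r1)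
    (d : Fin n → R n r) (hd : dSpec n r d) :
    ∀ p, p ≤ q1 - 1 →
      ((jac (Sum.elim (cc n r)
          fun i : Fin (p * r) => psi n r (by omega) (rle q1 r r1 n (by omega) hn) d (i : ℕ))).map
        (ev0 n r)).rank = n := by
  intro p hp
  have hrn : r ≤ n := rle q1 r r1 n hq1 hn
  have harith : p * r ≤ n - r - 1 := by
    obtain ⟨q, rfl⟩ : ∃ q, q1 = q + 1 := ⟨q1 - 1, by omega⟩
    have h6 : p * r ≤ q * r := Nat.mul_le_mul_right r (by omega)
    have h7 : (q + 1) * r = q * r + r := by ring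
    rw [h7] at hn
    generalize p * r = Pr at h6 ⊢
    generalize q * r = Q at h6 hn
    omega
  apply rank_aux
  · omega
  · exact hrn
  · intro i t ht
    have hi := i.isLt
    exact psi_ev0_pderiv hd _ _ (i : ℕ) (by omega) (Sum.inl t)
      (by show n - (t : ℕ) ≤ r; omega)
  · intro i j
    have hi := i.isLt
    exact psi_ev0_pderiv hd _ _ (i : ℕ) (by omega) (Sum.inr j)
      (by show r - (j : ℕ) ≤ r; omega)


end TB
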